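/- Consider the one-dimensional Hegselmann-Krause model with transmission delay, $\dot x_i(t) = \sum_{j \ne i}\frac{1}{N-1}\psi(|x_j(t-\tau)-x_i(t)|)(x_j(t-\tau)-x_i(t))$, $i=1,\dots,N$, $N \ge 2$, $\tau > 0$, with continuous initial data on $[-\tau,0]$, where $\psi : [0,\infty) \to (0,1]$ is continuous and strictly positive. Then the solution reaches global asymptotic consensus: $\lim_{t\to\infty}|x_i(t) - x_j(t)| = 0$ for all $i,j \in \{1,\dots,N\}$. -/

import Mathlib

open Set Filter Real

/-- Linear Grönwall comparison: if `f' ≤ -L f + C` on `(t₁,t₂)` then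
`f t ≤ C/L + exp(-L(t-t₁))(f t₁ - C/L)` on `[t₁,t₂]`. -/
lemma gronwall_aux (f : ℝ → ℝ) (t₁ t₂ L C : ℝ) (hL : 0 < L)
    (hcont : ContinuousOn f (Set.Icc t₁ t₂))
    (hderiv : ∀ t ∈ Set.Ioo t₁ t₂, ∃ d, HasDerivAt f d t ∧ d ≤ -(L * f t) + C) :
    ∀ t ∈ Set.Icc t₁ t₂, f t ≤ C/L + Real.exp (-(L*(t - t₁))) * (f t₁ - C/L) := by
  choose! d hd hle using hderiv
  intro t ht
  set g : ℝ → ℝ := fun s => Real.exp (L*s) * (f s - C/L) with hg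
  have hderivg : ∀ u ∈ Set.Ioo t₁ t₂, HasDerivAt g
      (Real.exp (L*u) * L * (f u - C/L) + Real.exp (L*u) * d u) u := by
    intro u hu
    have he : HasDerivAt (fun s => Real.exp (L*s)) (Real.exp (L*u) * L) u := by
      have h1 : HasDerivAt (fun s : ℝ => L*s) L u := by
        simpa using (hasDerivAt_id u).const_mul L
      exact (Real.hasDerivAt_exp (L*u)).comp u h1
    exact he.mul ((hd u hu).sub_const (C/L))
  have hCL : L * (C/L) = C := by field_simp
  have hanti : AntitoneOn g (Set.Icc t₁ t₂) := by
    apply antitoneOn_of_deriv_nonpos (convex_Icc t₁ t₂)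
    · exact (Real.continuous_exp.comp (continuous_const.mul continuous_id)).continuousOn.mul
        (hcont.sub continuousOn_const)
    · intro u hu
      rw [interior_Icc] at hu
      exact ((hderivg u hu).differentiableAt).differentiableWithinAt
    · intro u hu
      rw [interior_Icc] at hu
      rw [(hderivg u hu).deriv]
      have hexp := Real.exp_pos (L*u)
      nlinarith [mul_le_mul_of_nonneg_left (hle u hu) hexp.le]
  have h1 : g t ≤ g t₁ := hanti (Set.left_mem_Icc.mpr (ht.1.trans ht.2)) ht ht.1
  have h2 : f t - C/L ≤ Real.exp (-(L*(t - t₁))) * (f t₁ - C/L) := by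
    have h3 := mul_le_mul_of_nonneg_left h1 (Real.exp_pos (-(L*t))).le
    rw [hg] at h3
    simp only [← mul_assoc, ← Real.exp_add] at h3
    have e1 : -(L*t) + L*t = 0 := by ring
    have e2 : -(L*t) + L*t₁ = -(L*(t-t₁)) := by ring
    rw [e1, e2, Real.exp_zero, one_mul] at h3
    exact h3
  linarith



/-- Single-term bound: `c ψv v ≤ c (B - z)` when `v ≤ B - z`, `0 ≤ B - z`, `ψv ∈ (0,1]`, `c ≥ 0`. -/
lemma term_le (c ψv v B z : ℝ) (hc : 0 ≤ c) (hψ1 : ψv ≤ 1) (hψ0 : 0 < ψv)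
    (hv : v ≤ B - z) (hBz : 0 ≤ B - z) : c * ψv * v ≤ c * (B - z) := by
  rcases le_or_gt v 0 with h | h
  · have hA : 0 ≤ c * ψv := mul_nonneg hc hψ0.le
    have h1 : c * ψv * v ≤ c * ψv * 0 := mul_le_mul_of_nonneg_left h hA
    have h2 : 0 ≤ c * (B - z) := mul_nonneg hc hBz
    nlinarith
  · nlinarith [mul_le_mul_of_nonneg_left (mul_le_mul_of_nonneg_right hψ1 h.le) hc,
      mul_le_mul_of_nonneg_left hv hc]

lemma hk_sum_le (N : ℕ) (hN : 2 ≤ N) (τ : ℝ) (ψ : ℝ → ℝ)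
    (hψ : ∀ s : ℝ, 0 ≤ s → ψ s ∈ Set.Ioc (0 : ℝ) 1)
    (x : Fin N → ℝ → ℝ) (B t : ℝ) (i : Fin N)
    (hjB : ∀ j, x j (t - τ) ≤ B) (hiB : x i t ≤ B) :
    (∑ j ∈ Finset.univ.erase i,
      (1 / ((N : ℝ) - 1)) * ψ |x j (t - τ) - x i t| * (x j (t - τ) - x i t)) ≤ B - x i t := by
  have hN1 : (0:ℝ) < (N:ℝ) - 1 := by
    have : (2:ℝ) ≤ (N:ℝ) := by exact_mod_cast hN
    linarith
  have hc : (0:ℝ) ≤ 1 / ((N:ℝ) - 1) := by positivity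
  have hcard : ((Finset.univ.erase i).card : ℝ) = (N:ℝ) - 1 := by
    rw [Finset.card_erase_of_mem (Finset.mem_univ i), Finset.card_univ, Fintype.card_fin]
    have : 1 ≤ N := by omega
    push_cast [Nat.cast_sub this]
    ring
  calc (∑ j ∈ Finset.univ.erase i,
      (1 / ((N : ℝ) - 1)) * ψ |x j (t - τ) - x i t| * (x j (t - τ) - x i t))
      ≤ ∑ _j ∈ Finset.univ.erase i, (1 / ((N : ℝ) - 1)) * (B - x i t) := by
        apply Finset.sum_le_sum
        intro j _
        have habs := hψ |x j (t - τ) - x i t| (abs_nonneg _)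
        exact term_le _ _ _ _ _ hc habs.2 habs.1 (by linarith [hjB j]) (by linarith)
    _ = B - x i t := by
        rw [Finset.sum_const, nsmul_eq_mul, hcard]
        field_simp

lemma hk_neg_ode (N : ℕ) (τ : ℝ) (ψ : ℝ → ℝ) (x : Fin N → ℝ → ℝ)
    (hode : ∀ (i : Fin N) (t : ℝ), 0 < t → HasDerivAt (x i)
      (∑ j ∈ Finset.univ.erase i,
        (1 / ((N : ℝ) - 1)) * ψ |x j (t - τ) - x i t| * (x j (t - τ) - x i t)) t) :
    ∀ (i : Fin N) (t : ℝ), 0 < t → HasDerivAt (fun s => -(x i s))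
      (∑ j ∈ Finset.univ.erase i,
        (1 / ((N : ℝ) - 1)) * ψ |(fun k s => -(x k s)) j (t - τ) - (fun k s => -(x k s)) i t| *
          ((fun k s => -(x k s)) j (t - τ) - (fun k s => -(x k s)) i t)) t := by
  intro i t ht
  have h : HasDerivAt (fun s => -(x i s)) (-(∑ j ∈ Finset.univ.erase i,
      (1 / ((N : ℝ) - 1)) * ψ |x j (t - τ) - x i t| * (x j (t - τ) - x i t))) t := (hode i t ht).neg
  convert h using 1
  rw [← Finset.sum_neg_distrib]
  apply Finset.sum_congr rfl
  intro j _
  simp only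
  have e1 : -x j (t - τ) - -x i t = -(x j (t - τ) - x i t) := by ring
  rw [e1, abs_neg]
  ring

/-- Upper invariance: a bound on the window `[t₀-τ, t₀]` persists for all `t ≥ t₀`. -/
lemma hk_bound_above (N : ℕ) (hN : 2 ≤ N) (τ : ℝ) (hτ : 0 < τ)
    (ψ : ℝ → ℝ) (hψpos : ∀ s : ℝ, 0 ≤ s → 0 < ψ s)
    (x : Fin N → ℝ → ℝ)
    (hxcont : ∀ i, ContinuousOn (x i) (Set.Ici (-τ)))
    (hode : ∀ (i : Fin N) (t : ℝ), 0 < t → HasDerivAt (x i)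
      (∑ j ∈ Finset.univ.erase i,
        (1 / ((N : ℝ) - 1)) * ψ |x j (t - τ) - x i t| * (x j (t - τ) - x i t)) t)
    (t₀ B : ℝ) (ht₀ : 0 ≤ t₀)
    (hB : ∀ i s, t₀ - τ ≤ s → s ≤ t₀ → x i s ≤ B) :
    ∀ i t, t₀ ≤ t → x i t ≤ B := by
  have hN1 : (0:ℝ) < (N:ℝ) - 1 := by
    have : (2:ℝ) ≤ (N:ℝ) := by exact_mod_cast hN
    linarith
  have key : ∀ ε : ℝ, 0 < ε → ∀ i t, t₀ ≤ t → x i t ≤ B + ε := by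
    intro ε hε
    by_contra hcon
    push_neg at hcon
    obtain ⟨i₀, t₂, ht₂, hval⟩ := hcon
    set S : Set ℝ := {t | t₀ ≤ t ∧ ∃ i, B + ε ≤ x i t} with hS
    have hne : S.Nonempty := ⟨t₂, ht₂, i₀, hval.le⟩
    have hbdd : BddBelow S := ⟨t₀, fun t htS => htS.1⟩
    have hclosed : IsClosed S := by
      have hSeq : S = ⋃ i : Fin N, (Set.Ici t₀ ∩ x i ⁻¹' Set.Ici (B + ε)) := by
        ext u
        simp only [hS, Set.mem_setOf_eq, Set.mem_iUnion, Set.mem_inter_iff, Set.mem_Ici,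
          Set.mem_preimage]
        constructor
        · rintro ⟨h1, i, h2⟩; exact ⟨i, h1, h2⟩
        · rintro ⟨i, h1, h2⟩; exact ⟨h1, i, h2⟩
      rw [hSeq]
      apply isClosed_iUnion_of_finite
      intro i
      have hsub : Set.Ici t₀ ⊆ Set.Ici (-τ) := Set.Ici_subset_Ici.mpr (by linarith)
      exact ((hxcont i).mono hsub).preimage_isClosed_of_isClosed isClosed_Ici isClosed_Ici
    set t₁ := sInf S with ht₁def
    have ht₁S : t₁ ∈ S := hclosed.csInf_mem hne hbdd
    obtain ⟨ht₁0, i, hit⟩ := ht₁S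
    have ht₁gt : t₀ < t₁ := by
      rcases lt_or_eq_of_le ht₁0 with h | h
      · exact h
      · exfalso
        have := hB i t₀ (by linarith) le_rfl
        rw [h] at this
        linarith
    have hlt : ∀ (j : Fin N) s, t₀ - τ ≤ s → s < t₁ → x j s < B + ε := by
      intro j s hs1 hs2
      by_cases hs3 : s ≤ t₀
      · exact lt_of_le_of_lt (hB j s hs1 hs3) (by linarith)
      · by_contra h
        push_neg at h
        have hmem : s ∈ S := ⟨le_of_not_ge hs3, j, h⟩
        exact absurd (csInf_le hbdd hmem) (not_le.mpr hs2)
    have heq : x i t₁ = B + ε := by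
      refine le_antisymm ?_ hit
      have hsub : Set.Ioo t₀ t₁ ⊆ Set.Ici (-τ) := fun u hu => by
        simp only [Set.mem_Ici]; linarith [hu.1]
      have hcw : ContinuousWithinAt (x i) (Set.Ioo t₀ t₁) t₁ :=
        (((hxcont i).continuousWithinAt (by simp only [Set.mem_Ici]; linarith)).mono hsub)
      have hnb : (nhdsWithin t₁ (Set.Ioo t₀ t₁)).NeBot := by
        rw [← mem_closure_iff_nhdsWithin_neBot, closure_Ioo (ne_of_lt ht₁gt)]
        exact ⟨ht₁gt.le, le_rfl⟩
      refine le_of_tendsto hcw.tendsto ?_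
      filter_upwards [self_mem_nhdsWithin] with u hu
      exact (hlt i u (by linarith [hu.1]) hu.2).le
    have ht₁pos : 0 < t₁ := lt_of_le_of_lt ht₀ ht₁gt
    have hder := hode i t₁ ht₁pos
    set dsum := ∑ j ∈ Finset.univ.erase i,
        (1 / ((N : ℝ) - 1)) * ψ |x j (t₁ - τ) - x i t₁| * (x j (t₁ - τ) - x i t₁) with hdsum
    have hdneg : dsum < 0 := by
      apply Finset.sum_neg
      · intro j _
        have hv : x j (t₁ - τ) - x i t₁ < 0 := by
          have := hlt j (t₁ - τ) (by linarith) (by linarith)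
          rw [heq]; linarith
        have hψp := hψpos |x j (t₁ - τ) - x i t₁| (abs_nonneg _)
        have hcp : (0:ℝ) < 1 / ((N:ℝ) - 1) := by positivity
        exact mul_neg_of_pos_of_neg (mul_pos hcp hψp) hv
      · rw [← Finset.card_pos, Finset.card_erase_of_mem (Finset.mem_univ i),
          Finset.card_univ, Fintype.card_fin]
        omega
    have hslope : Filter.Tendsto (slope (x i) t₁) (nhdsWithin t₁ (Set.Iio t₁)) (nhds dsum) := by
      refine (hasDerivAt_iff_tendsto_slope.mp hder).mono_left (nhdsWithin_mono _ ?_)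
      intro u hu
      exact ne_of_lt hu
    have h3 : ∀ᶠ u in nhdsWithin t₁ (Set.Iio t₁), slope (x i) t₁ u < 0 :=
      hslope.eventually_lt_const hdneg
    have h4 : ∀ᶠ u in nhdsWithin t₁ (Set.Iio t₁), u ∈ Set.Ioo t₀ t₁ :=
      eventually_of_mem (Ioo_mem_nhdsLT_of_mem ⟨ht₁gt, le_rfl⟩) (fun u hu => hu)
    obtain ⟨u, hu1, hu2⟩ := (h3.and h4).exists
    have hune : u - t₁ ≠ 0 := by
      have := hu2.2; intro h; apply absurd this; rw [sub_eq_zero] at h; rw [h]; exact lt_irrefl _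
    have hslope_eq : x i u - x i t₁ = slope (x i) t₁ u * (u - t₁) := by
      rw [slope_def_field]
      field_simp
    have hgt : x i u > x i t₁ := by
      have h5 : slope (x i) t₁ u * (u - t₁) > 0 :=
        mul_pos_of_neg_of_neg hu1 (by linarith [hu2.2])
      linarith [hslope_eq ▸ h5]
    rw [heq] at hgt
    exact absurd (hlt i u (by linarith [hu2.1]) hu2.2) (not_lt.mpr hgt.le)
  intro i t ht
  exact le_of_forall_pos_le_add (fun ε hε => key ε hε i t ht)

lemma hk_bound_below (N : ℕ) (hN : 2 ≤ N) (τ : ℝ) (hτ : 0 < τ)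
    (ψ : ℝ → ℝ) (hψ : ∀ s : ℝ, 0 ≤ s → ψ s ∈ Set.Ioc (0 : ℝ) 1)
    (x : Fin N → ℝ → ℝ)
    (hxcont : ∀ i, ContinuousOn (x i) (Set.Ici (-τ)))
    (hode : ∀ (i : Fin N) (t : ℝ), 0 < t → HasDerivAt (x i)
      (∑ j ∈ Finset.univ.erase i,
        (1 / ((N : ℝ) - 1)) * ψ |x j (t - τ) - x i t| * (x j (t - τ) - x i t)) t)
    (t₀ A : ℝ) (ht₀ : 0 ≤ t₀)
    (hA : ∀ i s, t₀ - τ ≤ s → s ≤ t₀ → A ≤ x i s) : ∀ i t, t₀ ≤ t → A ≤ x i t := by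
  intro i t ht
  have hy := hk_bound_above N hN τ hτ ψ (fun s hs => (hψ s hs).1) (fun k s => -(x k s))
    (fun k => (hxcont k).neg) (hk_neg_ode N τ ψ x hode) t₀ (-A) ht₀
    (fun j s h1 h2 => neg_le_neg (hA j s h1 h2)) i t ht
  linarith

lemma hk_decay_upper (N : ℕ) (hN : 2 ≤ N) (τ : ℝ) (hτ : 0 < τ)
    (ψ : ℝ → ℝ) (hψ : ∀ s : ℝ, 0 ≤ s → ψ s ∈ Set.Ioc (0 : ℝ) 1)
    (x : Fin N → ℝ → ℝ)
    (hxcont : ∀ i, ContinuousOn (x i) (Set.Ici (-τ)))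
    (hode : ∀ (i : Fin N) (t : ℝ), 0 < t → HasDerivAt (x i)
      (∑ j ∈ Finset.univ.erase i,
        (1 / ((N : ℝ) - 1)) * ψ |x j (t - τ) - x i t| * (x j (t - τ) - x i t)) t)
    (t₀ B : ℝ) (ht₀ : 0 ≤ t₀)
    (hB : ∀ i s, t₀ - τ ≤ s → x i s ≤ B) :
    ∀ i t, t₀ ≤ t → Real.exp (-(t - t₀)) * (B - x i t₀) ≤ B - x i t := by
  intro i t ht
  have hcont : ContinuousOn (x i) (Set.Icc t₀ t) :=
    (hxcont i).mono (fun u hu => by simp only [Set.mem_Ici]; linarith [hu.1])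
  have hg := gronwall_aux (x i) t₀ t 1 B one_pos hcont ?_ t ⟨ht, le_rfl⟩
  · rw [div_one] at hg
    have he : Real.exp (-(1*(t - t₀))) = Real.exp (-(t - t₀)) := by ring_nf
    rw [he] at hg
    linarith
  · intro u hu
    refine ⟨_, hode i u (by linarith [hu.1]), ?_⟩
    have := hk_sum_le N hN τ ψ hψ x B u i
      (fun j => hB j (u - τ) (by linarith [hu.1]))
      (hB i u (by linarith [hu.1]))
    linarith


noncomputable def hkDelta (μ : ℝ) : ℝ := μ/8
noncomputable def hkLam (N : ℕ) (μ : ℝ) : ℝ := ((N:ℝ) - 2 + μ)/((N:ℝ) - 1)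
noncomputable def hkC1 (N : ℕ) (τ μ : ℝ) : ℝ :=
  min ((1 - Real.exp (-(hkLam N μ * hkDelta μ))) * μ / (4*((N:ℝ)-1)))
    (Real.exp (-(τ + hkDelta μ))/2)
noncomputable def hkTheta (N : ℕ) (τ μ : ℝ) : ℝ := Real.exp (-τ) * hkC1 N τ μ

lemma hkLam_pos {N : ℕ} {μ : ℝ} (hN : 2 ≤ N) (hμ0 : 0 < μ) : 0 < hkLam N μ := by
  have hN2 : (2:ℝ) ≤ (N:ℝ) := by exact_mod_cast hN
  unfold hkLam
  apply div_pos (by linarith) (by linarith)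

lemma hkLam_le_one {N : ℕ} {μ : ℝ} (hN : 2 ≤ N) (hμ1 : μ ≤ 1) : hkLam N μ ≤ 1 := by
  have hN2 : (2:ℝ) ≤ (N:ℝ) := by exact_mod_cast hN
  unfold hkLam
  rw [div_le_one (by linarith)]
  linarith

lemma hkC1_pos {N : ℕ} {τ μ : ℝ} (hN : 2 ≤ N) (hμ0 : 0 < μ) : 0 < hkC1 N τ μ := by
  have hN2 : (2:ℝ) ≤ (N:ℝ) := by exact_mod_cast hN
  apply lt_min
  · apply div_pos
    · apply mul_pos _ hμ0
      have : Real.exp (-(hkLam N μ * hkDelta μ)) < 1 := by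
        rw [Real.exp_lt_one_iff]
        have := hkLam_pos hN hμ0
        have : 0 < hkDelta μ := by unfold hkDelta; linarith
        nlinarith [hkLam_pos hN hμ0]
      linarith
    · linarith
  · positivity

lemma hkC1_le_half {N : ℕ} {τ μ : ℝ} (hτ : 0 < τ) (hμ0 : 0 < μ) : hkC1 N τ μ ≤ 1/2 := by
  refine le_trans (min_le_right _ _) ?_
  have : Real.exp (-(τ + hkDelta μ)) ≤ 1 := by
    rw [Real.exp_le_one_iff]
    unfold hkDelta
    linarith
  linarith

lemma hkTheta_pos {N : ℕ} {τ μ : ℝ} (hN : 2 ≤ N) (hμ0 : 0 < μ) : 0 < hkTheta N τ μ :=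
  mul_pos (Real.exp_pos _) (hkC1_pos hN hμ0)

lemma hkTheta_le_half {N : ℕ} {τ μ : ℝ} (hN : 2 ≤ N) (hτ : 0 < τ) (hμ0 : 0 < μ) :
    hkTheta N τ μ ≤ 1/2 := by
  have h1 := hkC1_pos (τ := τ) hN hμ0
  have h2 := hkC1_le_half (N := N) hτ hμ0
  have h3 : Real.exp (-τ) ≤ 1 := by rw [Real.exp_le_one_iff]; linarith
  have h4 := Real.exp_pos (-τ)
  unfold hkTheta
  nlinarith

set_option maxHeartbeats 4000000 in
lemma hk_contract (N : ℕ) (hN : 2 ≤ N) (τ : ℝ) (hτ : 0 < τ)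
    (ψ : ℝ → ℝ) (hψ : ∀ s : ℝ, 0 ≤ s → ψ s ∈ Set.Ioc (0 : ℝ) 1)
    (x : Fin N → ℝ → ℝ)
    (hxcont : ∀ i, ContinuousOn (x i) (Set.Ici (-τ)))
    (hode : ∀ (i : Fin N) (t : ℝ), 0 < t → HasDerivAt (x i)
      (∑ j ∈ Finset.univ.erase i,
        (1 / ((N : ℝ) - 1)) * ψ |x j (t - τ) - x i t| * (x j (t - τ) - x i t)) t)
    (μ d₀ : ℝ) (hμ0 : 0 < μ) (hμ1 : μ ≤ 1)
    (hμψ : ∀ s, 0 ≤ s → s ≤ d₀ → μ ≤ ψ s)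
    (T a b : ℝ) (hT : 0 ≤ T) (hbad : b - a ≤ d₀)
    (hab : ∀ i s, T - τ ≤ s → a ≤ x i s ∧ x i s ≤ b) :
    ∃ a' b', b' - a' ≤ (1 - hkTheta N τ μ) * (b - a) ∧
      ∀ i s, T + 2*τ + hkDelta μ ≤ s → a' ≤ x i s ∧ x i s ≤ b' := by
  have hN2 : (2:ℝ) ≤ (N:ℝ) := by exact_mod_cast hN
  have hN1 : (0:ℝ) < (N:ℝ) - 1 := by linarith
  have hδ0 : 0 < hkDelta μ := by unfold hkDelta; linarith
  have hδval : hkDelta μ = μ/8 := rfl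
  have hδle : hkDelta μ ≤ 1 := by rw [hδval]; linarith
  have hlam0 : 0 < hkLam N μ := hkLam_pos hN hμ0
  have hlam1 : hkLam N μ ≤ 1 := hkLam_le_one hN hμ1
  have hθ0 : 0 < hkTheta N τ μ := hkTheta_pos hN hμ0
  have hθh : hkTheta N τ μ ≤ 1/2 := hkTheta_le_half hN hτ hμ0
  set δ := hkDelta μ with hδdef
  clear_value δ
  have i0 : Fin N := ⟨0, by omega⟩
  have hab0 : a ≤ b := le_trans (hab i0 T (by linarith)).1 (hab i0 T (by linarith)).2
  have hD0 : 0 ≤ b - a := by linarith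
  -- attained minimum over the window [T, T+τ]
  have hmin : ∀ j : Fin N, ∃ s ∈ Set.Icc T (T+τ), IsMinOn (x j) (Set.Icc T (T+τ)) s := by
    intro j
    apply isCompact_Icc.exists_isMinOn (Set.nonempty_Icc.mpr (by linarith))
    exact (hxcont j).mono (fun u hu => by
      simp only [Set.mem_Ici]
      linarith [hu.1])
  choose σ hσmem hσmin using hmin
  obtain ⟨l, _, hlmin⟩ := Finset.exists_min_image Finset.univ (fun j => x j (σ j))
    ⟨i0, Finset.mem_univ _⟩
  set s' := σ l with hs'def
  set m' := x l s' with hm'def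
  have hm'win : ∀ s ∈ Set.Icc T (T+τ), m' ≤ x l s := fun s hs => hσmin l hs
  have hs'1 : T ≤ s' := (hσmem l).1
  have hs'2 : s' ≤ T + τ := (hσmem l).2
  have hwin : ∀ (j : Fin N) s, T ≤ s → s ≤ T + τ → m' ≤ x j s := by
    intro j s h1 h2
    exact le_trans (hlmin j (Finset.mem_univ j)) (hσmin j ⟨h1, h2⟩)
  clear_value m'
  clear_value s'
  have hma : a ≤ m' := by rw [hm'def]; exact (hab l s' (by linarith)).1
  have hmb : m' ≤ b := by rw [hm'def]; exact (hab l s' (by linarith)).2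
  have hlow : ∀ i t, T + τ ≤ t → m' ≤ x i t := by
    have := hk_bound_below N hN τ hτ ψ hψ x hxcont hode (T+τ) m' (by linarith)
      (fun i s h1 h2 => hwin i s (by linarith) h2)
    exact this
  have hup : ∀ i s, T - τ ≤ s → x i s ≤ b := fun i s h => (hab i s h).2
  by_cases hcase : b - m' ≤ (b - a)/2
  · refine ⟨m', b, by nlinarith, fun i s hs => ⟨?_, ?_⟩⟩
    · exact hlow i s (by linarith)
    · exact hup i s (by linarith)
  · push_neg at hcase
    have hDpos : 0 < b - a := by linarith
    -- step 1 : x l stays low for a while after s'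
    have hstep1 : ∀ t, s' ≤ t → t ≤ s' + δ → x l t ≤ m' + δ * (b - a) := by
      intro t h1 h2
      have hcont : ContinuousOn (x l) (Set.Icc s' (s' + δ)) := by
        apply (hxcont l).mono
        intro u hu
        simp only [Set.mem_Ici]
        linarith [hu.1]
      have hderiv : ∀ u ∈ Set.Ioo s' (s' + δ), ∃ d, HasDerivAt (x l) d u ∧
          d ≤ -(1 * x l u) + b := by
        intro u hu
        refine ⟨_, hode l u (by linarith [hu.1]), ?_⟩
        have := hk_sum_le N hN τ ψ hψ x b u l
          (fun j => hup j (u - τ) (by linarith [hu.1]))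
          (hup l u (by linarith [hu.1]))
        linarith
      have hg := gronwall_aux (x l) s' (s' + δ) 1 b one_pos hcont hderiv t ⟨h1, h2⟩
      rw [div_one] at hg
      have hexp := Real.add_one_le_exp (-(1*(t - s')))
      have hmb' : x l s' - b ≤ 0 := by rw [← hm'def]; linarith
      have h3 : Real.exp (-(1*(t - s'))) * (x l s' - b)
          ≤ (1 - (t - s')) * (x l s' - b) := by
        apply mul_le_mul_of_nonpos_right _ hmb'
        linarith
      rw [← hm'def] at hg h3
      have h4 : (t - s') * (b - m') ≤ δ * (b - a) := by nlinarith
      nlinarith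
    -- step 2 : refined derivative bound for i ≠ l on (s'+τ, s'+τ+δ)
    have hstep2 : ∀ i : Fin N, i ≠ l → ∀ u ∈ Set.Ioo (s' + τ) (s' + τ + δ),
        (∑ j ∈ Finset.univ.erase i,
          (1 / ((N : ℝ) - 1)) * ψ |x j (u - τ) - x i u| * (x j (u - τ) - x i u))
          ≤ -(hkLam N μ * x i u) +
            (((N:ℝ)-2)*b + μ*m' + 2*δ*(b-a))/((N:ℝ)-1) := by
      intro i hil u hu
      have hu1 : s' + τ < u := hu.1
      have hu2 : u < s' + τ + δ := hu.2
      have hl_mem : l ∈ Finset.univ.erase i :=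
        Finset.mem_erase.mpr ⟨Ne.symm hil, Finset.mem_univ l⟩
      rw [← Finset.add_sum_erase _ _ hl_mem]
      have hxiu_m : m' ≤ x i u := hlow i u (by linarith)
      have hxiu_b : x i u ≤ b := hup i u (by linarith)
      have hxl : x l (u - τ) ≤ m' + δ * (b - a) :=
        hstep1 (u - τ) (by linarith) (by linarith)
      have hxl_a : a ≤ x l (u - τ) := (hab l (u - τ) (by linarith)).1
      set v := x l (u - τ) - x i u with hv
      have hxia : a ≤ x i u := by linarith
      have hvabs : |v| ≤ d₀ := by
        rw [abs_le]
        refine ⟨by simp only [hv]; linarith [hup l (u - τ) (by linarith : T - τ ≤ u - τ)], ?_⟩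
        simp only [hv]
        linarith [hup l (u - τ) (by linarith : T - τ ≤ u - τ)]
      have hψv := hψ |v| (abs_nonneg v)
      have hμv : μ ≤ ψ |v| := hμψ |v| (abs_nonneg v) hvabs
      clear_value v
      have hc : (0:ℝ) < 1/((N:ℝ)-1) := by positivity
      have hterm_l : (1/((N:ℝ)-1)) * ψ |v| * v
          ≤ (1/((N:ℝ)-1)) * (μ*(m' - x i u) + 2*δ*(b-a)) := by
        rcases le_or_gt v 0 with hv0 | hv0
        · have h1 : ψ |v| * v ≤ μ * v := by
            nlinarith [mul_nonneg (sub_nonneg.mpr hμv) (neg_nonneg.mpr hv0)]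
          have h2 : μ * v ≤ μ*(m' - x i u) + 2*δ*(b-a) := by
            have hvle : v ≤ m' + δ*(b-a) - x i u := by simp only [hv]; linarith
            nlinarith [mul_le_mul_of_nonneg_left hvle hμ0.le,
              mul_nonneg (mul_nonneg (by linarith : (0:ℝ) ≤ 2 - μ) hδ0.le) hD0]
          nlinarith [mul_le_mul_of_nonneg_left (h1.trans h2) hc.le]
        · have h1 : ψ |v| * v ≤ v := by
            nlinarith [mul_nonneg (sub_nonneg.mpr hψv.2) hv0.le]
          have h2 : v ≤ δ*(b-a) := by simp only [hv]; linarith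
          have h3 : -(δ*(b-a)) ≤ m' - x i u := by simp only [hv] at hv0; linarith
          have h4 : v ≤ μ*(m' - x i u) + 2*δ*(b-a) := by
            nlinarith [mul_le_mul_of_nonneg_left h3 hμ0.le,
              mul_nonneg (mul_nonneg (by linarith : (0:ℝ) ≤ 2 - μ) hδ0.le) hD0]
          nlinarith [mul_le_mul_of_nonneg_left (h1.trans h4) hc.le]
      have hcard : ((((Finset.univ : Finset (Fin N)).erase i).erase l).card : ℝ) = (N:ℝ) - 2 := by
        rw [Finset.card_erase_of_mem hl_mem, Finset.card_erase_of_mem (Finset.mem_univ i),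
          Finset.card_univ, Fintype.card_fin]
        have h5 : N - 1 - 1 = N - 2 := by omega
        rw [h5, Nat.cast_sub (by omega : 2 ≤ N)]
        norm_num
      have hrest : (∑ j ∈ (Finset.univ.erase i).erase l,
          (1/((N:ℝ)-1)) * ψ |x j (u - τ) - x i u| * (x j (u - τ) - x i u))
          ≤ (((N:ℝ)-2)) * ((1/((N:ℝ)-1)) * (b - x i u)) := by
        calc (∑ j ∈ (Finset.univ.erase i).erase l,
            (1/((N:ℝ)-1)) * ψ |x j (u - τ) - x i u| * (x j (u - τ) - x i u))
            ≤ ∑ _j ∈ (Finset.univ.erase i).erase l, (1/((N:ℝ)-1)) * (b - x i u) := by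
              apply Finset.sum_le_sum
              intro j _
              have habs := hψ |x j (u - τ) - x i u| (abs_nonneg _)
              refine term_le _ _ _ _ _ hc.le habs.2 habs.1 ?_ (by linarith)
              have := hup j (u - τ) (by linarith)
              linarith
          _ = (((N:ℝ)-2)) * ((1/((N:ℝ)-1)) * (b - x i u)) := by
              rw [Finset.sum_const, nsmul_eq_mul, hcard]
      have hsum := add_le_add hterm_l hrest
      refine le_trans hsum (le_of_eq ?_)
      simp only [hkLam]
      field_simp
      ring
    -- step 3 : uniform gap at time tstar := s' + τ + δ
    have hstep3 : ∀ i, hkC1 N τ μ * (b - a) ≤ b - x i (s' + τ + δ) := by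
      intro i
      by_cases hil : i = l
      · rw [hil]
        have hcont : ContinuousOn (x l) (Set.Icc s' (s' + τ + δ)) :=
          (hxcont l).mono (fun u hu => by
            simp only [Set.mem_Ici]; linarith [hu.1])
        have hderiv : ∀ u ∈ Set.Ioo s' (s' + τ + δ), ∃ d, HasDerivAt (x l) d u ∧
            d ≤ -(1 * x l u) + b := by
          intro u hu
          refine ⟨_, hode l u (by linarith [hu.1]), ?_⟩
          have := hk_sum_le N hN τ ψ hψ x b u l
            (fun j => hup j (u - τ) (by linarith [hu.1]))
            (hup l u (by linarith [hu.1]))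
          linarith
        have hg := gronwall_aux (x l) s' (s' + τ + δ) 1 b one_pos hcont hderiv
          (s' + τ + δ) ⟨by linarith, le_rfl⟩
        rw [div_one] at hg
        have he : (1:ℝ)*(s' + τ + δ - s') = τ + δ := by ring
        rw [he, ← hm'def] at hg
        have hc1r : hkC1 N τ μ ≤ Real.exp (-(τ + δ))/2 := by
          rw [hδdef]; exact min_le_right _ _
        have hEp := Real.exp_pos (-(τ + δ))
        have h6 : Real.exp (-(τ + δ)) * ((b-a)/2) ≤ Real.exp (-(τ + δ)) * (b - m') :=
          mul_le_mul_of_nonneg_left (by linarith) hEp.le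
        nlinarith
      · have hcont : ContinuousOn (x i) (Set.Icc (s' + τ) (s' + τ + δ)) :=
          (hxcont i).mono (fun u hu => by
            simp only [Set.mem_Ici]; linarith [hu.1])
        set Cc := (((N:ℝ)-2)*b + μ*m' + 2*δ*(b-a))/((N:ℝ)-1) with hCcdef
        clear_value Cc
        have hderiv : ∀ u ∈ Set.Ioo (s' + τ) (s' + τ + δ), ∃ d, HasDerivAt (x i) d u ∧
            d ≤ -(hkLam N μ * x i u) + Cc := by
          intro u hu
          exact ⟨_, hode i u (by linarith [hu.1]), hstep2 i hil u hu⟩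
        have hg := gronwall_aux (x i) (s' + τ) (s' + τ + δ) (hkLam N μ) Cc hlam0 hcont
          hderiv (s' + τ + δ) ⟨by linarith, le_rfl⟩
        have he : hkLam N μ * (s' + τ + δ - (s' + τ)) = hkLam N μ * δ := by ring
        rw [he] at hg
        have hxt1 : x i (s' + τ) ≤ b := hup i (s' + τ) (by linarith)
        have heq : b - Cc/(hkLam N μ) = (hkLam N μ * b - Cc)/(hkLam N μ) := by
          field_simp
        have h1 : hkLam N μ * b - Cc = (μ*(b - m') - 2*δ*(b-a))/((N:ℝ)-1) := by
          simp only [hCcdef, hkLam]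
          field_simp
          ring
        have h2 : μ*(b-a)/4 ≤ μ*(b - m') - 2*δ*(b-a) := by
          rw [hδval]
          nlinarith [mul_le_mul_of_nonneg_left hcase.le hμ0.le]
        have h3 : μ*(b-a)/(4*((N:ℝ)-1)) ≤ hkLam N μ * b - Cc := by
          rw [← div_div, h1]
          exact (div_le_div_iff_of_pos_right hN1).mpr h2
        have hq0 : 0 ≤ μ*(b-a)/(4*((N:ℝ)-1)) := by positivity
        have hnum : 0 ≤ hkLam N μ * b - Cc := le_trans hq0 h3
        have h4 : hkLam N μ * b - Cc ≤ (hkLam N μ * b - Cc)/(hkLam N μ) := by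
          rw [le_div_iff₀ hlam0]
          nlinarith
        have hbC : μ*(b-a)/(4*((N:ℝ)-1)) ≤ b - Cc/(hkLam N μ) := by
          rw [heq]; linarith
        set E := Real.exp (-(hkLam N μ * δ)) with hEdef
        clear_value E
        have hE0 : 0 < E := by rw [hEdef]; exact Real.exp_pos _
        have hE1 : E < 1 := by
          rw [hEdef, Real.exp_lt_one_iff]
          nlinarith
        have h5 : x i (s' + τ + δ) ≤ Cc/(hkLam N μ) + E*(b - Cc/(hkLam N μ)) := by
          have h7 : E*(x i (s' + τ) - Cc/(hkLam N μ)) ≤ E*(b - Cc/(hkLam N μ)) :=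
            mul_le_mul_of_nonneg_left (by linarith) hE0.le
          linarith
        have hc1l : hkC1 N τ μ ≤ (1 - E) * μ / (4*((N:ℝ)-1)) := by
          rw [hEdef, hδdef]; exact min_le_left _ _
        have hA1 : hkC1 N τ μ * (b-a) ≤ ((1 - E)*μ/(4*((N:ℝ)-1))) * (b-a) :=
          mul_le_mul_of_nonneg_right hc1l hD0
        have hA2 : ((1 - E)*μ/(4*((N:ℝ)-1))) * (b-a)
            = (1-E)*(μ*(b-a)/(4*((N:ℝ)-1))) := by ring
        have hA3 : (1-E)*(μ*(b-a)/(4*((N:ℝ)-1))) ≤ (1-E)*(b - Cc/(hkLam N μ)) :=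
          mul_le_mul_of_nonneg_left hbC (by linarith)
        have hA4 : (1-E)*(b - Cc/(hkLam N μ))
            = (b - Cc/(hkLam N μ)) - E*(b - Cc/(hkLam N μ)) := by ring
        linarith
    -- step 4 : the gap persists on [tstar, tstar + τ]
    have hstep4 : ∀ i t, s' + τ + δ ≤ t → t ≤ s' + τ + δ + τ →
        x i t ≤ b - hkTheta N τ μ * (b - a) := by
      intro i t h1 h2
      have hdec := hk_decay_upper N hN τ hτ ψ hψ x hxcont hode (s' + τ + δ) b
        (by linarith) (fun j s hs => hup j s (by linarith)) i t h1
      have h3 : Real.exp (-τ) ≤ Real.exp (-(t - (s' + τ + δ))) :=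
        Real.exp_le_exp.mpr (by linarith)
      have h4 : 0 ≤ b - x i (s' + τ + δ) :=
        le_trans (mul_nonneg (hkC1_pos hN hμ0).le hD0) (hstep3 i)
      have h5 : Real.exp (-τ) * (hkC1 N τ μ * (b - a))
          ≤ Real.exp (-(t - (s' + τ + δ))) * (b - x i (s' + τ + δ)) := by
        apply mul_le_mul h3 (hstep3 i) (mul_nonneg (hkC1_pos hN hμ0).le hD0) (Real.exp_pos _).le
      have h6 : hkTheta N τ μ * (b - a) = Real.exp (-τ) * (hkC1 N τ μ * (b - a)) := by
        rw [hkTheta]; ring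
      linarith
    -- step 5 : permanent upper bound
    have hstep5 : ∀ i t, s' + τ + δ + τ ≤ t → x i t ≤ b - hkTheta N τ μ * (b - a) := by
      apply hk_bound_above N hN τ hτ ψ (fun s hs => (hψ s hs).1) x hxcont hode
        (s' + τ + δ + τ) (b - hkTheta N τ μ * (b - a)) (by linarith)
      intro i s hs1 hs2
      exact hstep4 i s (by linarith) (by linarith)
    refine ⟨a, b - hkTheta N τ μ * (b - a), by nlinarith, fun i s hs => ⟨?_, ?_⟩⟩
    · exact (hab i s (by linarith)).1
    · rcases le_or_gt (s' + τ + δ + τ) s with h | h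
      · exact hstep5 i s h
      · exact hstep4 i s (by linarith) (by linarith)

/-- Main Theorem (1D, classical weights): the Hegselmann-Krause model with transmission
delay and weights `(1/(N-1)) ψ(|x_j(t-τ)-x_i(t)|)`, `ψ` continuous with values in `(0,1]`,
reaches global asymptotic consensus for any delay `τ > 0`. -/
theorem HK_delay_consensus_classical (N : ℕ) (hN : 2 ≤ N) (τ : ℝ) (hτ : 0 < τ)
    (ψ : ℝ → ℝ) (hψcont : ContinuousOn ψ (Set.Ici 0))
    (hψ : ∀ s : ℝ, 0 ≤ s → ψ s ∈ Set.Ioc (0 : ℝ) 1)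
    (x : Fin N → ℝ → ℝ)
    (hxcont : ∀ i, ContinuousOn (x i) (Set.Ici (-τ)))
    (hode : ∀ (i : Fin N) (t : ℝ), 0 < t → HasDerivAt (x i)
      (∑ j ∈ Finset.univ.erase i,
        (1 / ((N : ℝ) - 1)) * ψ |x j (t - τ) - x i t| * (x j (t - τ) - x i t)) t) :
    ∀ i j : Fin N,
      Filter.Tendsto (fun t => |x i t - x j t|) Filter.atTop (nhds 0) := by
  -- initial bounds on [-τ, 0]
  have hτ' : -τ ≤ 0 := by linarith
  have i0 : Fin N := ⟨0, by omega⟩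
  have hcontIcc : ∀ i : Fin N, ContinuousOn (x i) (Set.Icc (-τ) 0) :=
    fun i => (hxcont i).mono (fun u hu => hu.1)
  have hmax : ∀ i : Fin N, ∃ bi, ∀ s ∈ Set.Icc (-τ) 0, x i s ≤ bi := by
    intro i
    obtain ⟨u, hu, humax⟩ := isCompact_Icc.exists_isMaxOn (Set.nonempty_Icc.mpr hτ')
      (hcontIcc i)
    exact ⟨x i u, fun s hs => humax hs⟩
  have hmin : ∀ i : Fin N, ∃ ai, ∀ s ∈ Set.Icc (-τ) 0, ai ≤ x i s := by
    intro i
    obtain ⟨u, hu, humin⟩ := isCompact_Icc.exists_isMinOn (Set.nonempty_Icc.mpr hτ')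
      (hcontIcc i)
    exact ⟨x i u, fun s hs => humin hs⟩
  choose Bf hBf using hmax
  choose Af hAf using hmin
  have hne : (Finset.univ : Finset (Fin N)).Nonempty := ⟨i0, Finset.mem_univ _⟩
  set b₀ := Finset.univ.sup' hne Bf with hb₀def
  set a₀ := Finset.univ.inf' hne Af with ha₀def
  have hwinU : ∀ (i : Fin N) s, -τ ≤ s → s ≤ 0 → x i s ≤ b₀ := fun i s h1 h2 =>
    le_trans (hBf i s ⟨h1, h2⟩) (Finset.le_sup' Bf (Finset.mem_univ i))
  have hwinL : ∀ (i : Fin N) s, -τ ≤ s → s ≤ 0 → a₀ ≤ x i s := fun i s h1 h2 =>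
    le_trans (Finset.inf'_le Af (Finset.mem_univ i)) (hAf i s ⟨h1, h2⟩)
  have hglobU : ∀ (i : Fin N) s, -τ ≤ s → x i s ≤ b₀ := by
    intro i s hs
    rcases le_or_gt s 0 with h | h
    · exact hwinU i s hs h
    · exact hk_bound_above N hN τ hτ ψ (fun u hu => (hψ u hu).1) x hxcont hode 0 b₀ le_rfl
        (fun j u h1 h2 => hwinU j u (by linarith) h2) i s h.le
  have hglobL : ∀ (i : Fin N) s, -τ ≤ s → a₀ ≤ x i s := by
    intro i s hs
    rcases le_or_gt s 0 with h | h
    · exact hwinL i s hs h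
    · exact hk_bound_below N hN τ hτ ψ hψ x hxcont hode 0 a₀ le_rfl
        (fun j u h1 h2 => hwinL j u (by linarith) h2) i s h.le
  have hab0 : a₀ ≤ b₀ := le_trans (hwinL i0 0 hτ' le_rfl) (hwinU i0 0 hτ' le_rfl)
  set d₀ := b₀ - a₀ with hd₀def
  have hd₀0 : 0 ≤ d₀ := by rw [hd₀def]; linarith
  -- uniform lower bound of ψ on [0, d₀]
  obtain ⟨s₀, hs₀mem, hs₀min⟩ := isCompact_Icc.exists_isMinOn
    (Set.nonempty_Icc.mpr hd₀0) (hψcont.mono (fun u hu => hu.1))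
  set μ := ψ s₀ with hμdef
  have hμ0 : 0 < μ := (hψ s₀ hs₀mem.1).1
  have hμ1 : μ ≤ 1 := (hψ s₀ hs₀mem.1).2
  have hμψ : ∀ s, 0 ≤ s → s ≤ d₀ → μ ≤ ψ s := fun s h1 h2 => hs₀min ⟨h1, h2⟩
  clear_value μ
  set r := 1 - hkTheta N τ μ with hrdef
  have hθ0 : 0 < hkTheta N τ μ := hkTheta_pos hN hμ0
  have hθh : hkTheta N τ μ ≤ 1/2 := hkTheta_le_half hN hτ hμ0
  have hr0 : 0 ≤ r := by rw [hrdef]; linarith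
  have hr1 : r < 1 := by rw [hrdef]; linarith
  have hδ0 : 0 < hkDelta μ := by unfold hkDelta; linarith
  -- the inductive contraction
  have hind : ∀ n : ℕ, ∃ a b, b - a ≤ r^n * d₀ ∧
      ∀ (i : Fin N) s, τ + n*(3*τ + hkDelta μ) - τ ≤ s → a ≤ x i s ∧ x i s ≤ b := by
    intro n
    induction n with
    | zero =>
        refine ⟨a₀, b₀, by simp [hd₀def], fun i s hs => ⟨?_, ?_⟩⟩
        · exact hglobL i s (by push_cast at hs; linarith)
        · exact hglobU i s (by push_cast at hs; linarith)
    | succ n ih =>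
        obtain ⟨a, b, hw, hb⟩ := ih
        have hrpow : r^n ≤ 1 := pow_le_one₀ hr0 hr1.le
        have hrpn : 0 ≤ r^n := pow_nonneg hr0 n
        have hbad : b - a ≤ d₀ := le_trans hw (by nlinarith)
        have hT : 0 ≤ τ + n*(3*τ + hkDelta μ) := by positivity
        obtain ⟨a', b', hw', hb'⟩ := hk_contract N hN τ hτ ψ hψ x hxcont hode μ d₀
          hμ0 hμ1 hμψ (τ + n*(3*τ + hkDelta μ)) a b hT hbad hb
        refine ⟨a', b', ?_, ?_⟩
        · have hba : 0 ≤ b - a := by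
            obtain ⟨h1, h2⟩ := hb i0 (τ + n*(3*τ + hkDelta μ))
              (by linarith)
            linarith
          calc b' - a' ≤ (1 - hkTheta N τ μ) * (b - a) := hw'
            _ ≤ r * (r^n * d₀) := by rw [hrdef]; nlinarith
            _ = r^(n+1) * d₀ := by ring
        · intro i s hs
          apply hb' i s
          push_cast at hs
          linarith
  -- conclusion
  intro i j
  rw [Metric.tendsto_atTop]
  intro ε hε
  have htend : Filter.Tendsto (fun n : ℕ => r^n * d₀) Filter.atTop (nhds 0) := by
    simpa using (tendsto_pow_atTop_nhds_zero_of_lt_one hr0 hr1).mul_const d₀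
  obtain ⟨n, hn⟩ := (htend.eventually_lt_const hε).exists
  obtain ⟨a, b, hw, hb⟩ := hind n
  refine ⟨τ + n*(3*τ + hkDelta μ), fun t ht => ?_⟩
  obtain ⟨h1i, h2i⟩ := hb i t (by linarith)
  obtain ⟨h1j, h2j⟩ := hb j t (by linarith)
  rw [Real.dist_eq, sub_zero, abs_abs]
  have : |x i t - x j t| ≤ b - a := abs_le.mpr ⟨by linarith, by linarith⟩
  linarith
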